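/- Let S be a commutative semiring and let M be an S-semimodule of finite length. Then every injective S-linear endomorphism α : M → M is surjective. -/

import Mathlib

/-- The length of an `S`-semimodule `M`: the supremum of all `r : ℕ` such that there exists a
strictly increasing chain `M₀ ⊊ M₁ ⊊ ⋯ ⊊ M_r` of subsemimodules (i.e. `S`-submodules) of `M`. -/
noncomputable def semimoduleLength (S M : Type*) [Semiring S] [AddCommMonoid M]
    [Module S M] : ℕ∞ :=
  ⨆ r : {r : ℕ // ∃ c : Fin (r + 1) → Submodule S M, StrictMono c}, ((r : ℕ) : ℕ∞)

/-- Over a commutative semiring, every injective endomorphism of a finite-length semimodule is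
surjective. -/
theorem surjective_of_injective {S : Type*} [CommSemiring S]
    {M : Type*} [AddCommMonoid M] [Module S M] (hM : semimoduleLength S M ≠ ⊤)
    (α : M →ₗ[S] M) (hα : Function.Injective α) : Function.Surjective α := by
  by_contra hsurj
  rw [← Set.range_eq_univ] at hsurj
  obtain ⟨x, hx⟩ := (Set.ne_univ_iff_exists_notMem _).mp hsurj
  have hpowinj : ∀ n : ℕ, Function.Injective ⇑(α ^ n) := by
    intro n
    have : ⇑(α ^ n) = α^[n] := by
      funext m; exact Module.End.pow_apply α n m
    rw [this]
    exact hα.iterate n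
  set c : ℕ → Submodule S M := fun n => LinearMap.range (α ^ n) with hc
  have hAnti : StrictAnti c := by
    apply strictAnti_nat_of_succ_lt
    intro n
    rw [lt_iff_le_and_ne]
    constructor
    · rintro _ ⟨y, rfl⟩
      refine ⟨α y, ?_⟩
      rw [pow_succ]
      rfl
    · intro heq
      have hmem : (α ^ n) x ∈ c n := ⟨x, rfl⟩
      rw [← heq] at hmem
      obtain ⟨y, hy⟩ := hmem
      have : (α ^ n) (α y) = (α ^ n) x := by
        rw [← hy, pow_succ]; rfl
      exact hx ⟨y, hpowinj n this⟩
  have key : ∀ r : ℕ, ((r : ℕ) : ℕ∞) ≤ semimoduleLength S M := by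
    intro r
    have hchain : ∃ d : Fin (r + 1) → Submodule S M, StrictMono d := by
      refine ⟨fun i => c (r - i), fun i j hij => ?_⟩
      exact hAnti (by omega)
    exact le_iSup (fun s : {r : ℕ // ∃ c : Fin (r + 1) → Submodule S M, StrictMono c} =>
      ((s : ℕ) : ℕ∞)) ⟨r, hchain⟩
  obtain ⟨L, hL⟩ := WithTop.ne_top_iff_exists.mp hM
  have := key (L + 1)
  rw [← hL] at this
  have h2 : (L : ℕ∞) + 1 ≤ (L : ℕ∞) := by exact this
  exact absurd ((ENat.add_one_le_iff (by simp)).mp h2) (lt_irrefl _)
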